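/- In the free algebra C⟨x,y⟩, let S be the ideal generated by xy + yx, x² + x³ + y², x³y, and x⁵. Then the quotient C⟨x,y⟩/S has dimension at most 8 as a complex vector space, spanned by the images of 1, x, x², x³, x⁴, y, xy, x²y. -/
import Mathlib

theorem stmt_12 (x y : FreeAlgebra ℂ (Fin 2))
    (hx : x = FreeAlgebra.ι ℂ 0) (hy : y = FreeAlgebra.ι ℂ 1)
    (S : TwoSidedIdeal (FreeAlgebra ℂ (Fin 2)))
    (hS : S = TwoSidedIdeal.span
      {x * y + y * x, x ^ 2 + x ^ 3 + y ^ 2, x ^ 3 * y, x ^ 5}) :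
    ∀ r : FreeAlgebra ℂ (Fin 2), ∃ c : Fin 8 → ℂ,
      r - ∑ i, c i • (![1, x, x ^ 2, x ^ 3, x ^ 4, y, x * y, x ^ 2 * y] i) ∈ S := by
  set f : Fin 8 → FreeAlgebra ℂ (Fin 2) := ![1, x, x ^ 2, x ^ 3, x ^ 4, y, x * y, x ^ 2 * y]
    with hf
  -- generators of S
  have g1 : x * y + y * x ∈ S := hS ▸ TwoSidedIdeal.subset_span (by simp)
  have g2 : x ^ 2 + x ^ 3 + y ^ 2 ∈ S := hS ▸ TwoSidedIdeal.subset_span (by simp)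
  have g3 : x ^ 3 * y ∈ S := hS ▸ TwoSidedIdeal.subset_span (by simp)
  have g5 : x ^ 5 ∈ S := hS ▸ TwoSidedIdeal.subset_span (by simp)
  -- derived membership lemmas
  have memeq : ∀ a b : FreeAlgebra ℂ (Fin 2), b ∈ S → a = b → a ∈ S :=
    fun a b hb h => h ▸ hb
  have s6 : x ^ 6 ∈ S := memeq _ _ (S.mul_mem_left x _ g5) (by noncomm_ring)
  have s7 : x ^ 7 ∈ S := memeq _ _ (S.mul_mem_left (x ^ 2) _ g5) (by noncomm_ring)
  have s8 : x ^ 8 ∈ S := memeq _ _ (S.mul_mem_left (x ^ 3) _ g5) (by noncomm_ring)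
  have s4y : x ^ 4 * y ∈ S := memeq _ _ (S.mul_mem_left x _ g3) (by noncomm_ring)
  have s5y : x ^ 5 * y ∈ S := memeq _ _ (S.mul_mem_left (x ^ 2) _ g3) (by noncomm_ring)
  have s6y : x ^ 6 * y ∈ S := memeq _ _ (S.mul_mem_left (x ^ 3) _ g3) (by noncomm_ring)
  have s2' : y ^ 2 + x ^ 2 + x ^ 3 ∈ S := memeq _ _ g2 (by noncomm_ring)
  have syx2 : y * x ^ 2 - x ^ 2 * y ∈ S :=
    memeq _ _ (S.sub_mem (S.mul_mem_right _ x g1) (S.mul_mem_left x _ g1)) (by noncomm_ring)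
  have syx3 : y * x ^ 3 ∈ S :=
    memeq _ _ (S.sub_mem (S.add_mem (S.mul_mem_right _ x syx2)
      (S.mul_mem_left (x ^ 2) _ g1)) g3) (by noncomm_ring)
  have syx4 : y * x ^ 4 ∈ S := memeq _ _ (S.mul_mem_right _ x syx3) (by noncomm_ring)
  have sxy2 : x * y ^ 2 + x ^ 3 + x ^ 4 ∈ S :=
    memeq _ _ (S.mul_mem_left x _ s2') (by noncomm_ring)
  have syxy : y * x * y - x ^ 3 - x ^ 4 ∈ S :=
    memeq _ _ (S.sub_mem (S.mul_mem_right _ y g1) sxy2) (by noncomm_ring)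
  have syx2y : y * x ^ 2 * y + x ^ 4 ∈ S :=
    memeq _ _ (S.sub_mem (S.add_mem (S.mul_mem_right _ y syx2)
      (S.mul_mem_left (x ^ 2) _ s2')) g5) (by noncomm_ring)
  have a1 : x * (x * y + y * x) ∈ S := S.mul_mem_left x _ g1
  have a2 : x * (y * x ^ 2 - x ^ 2 * y) + x ^ 3 * y ∈ S :=
    S.add_mem (S.mul_mem_left x _ syx2) g3
  have a3 : x * (y * x ^ 3) ∈ S := S.mul_mem_left x _ syx3
  have a4 : x * (y * x ^ 4) ∈ S := S.mul_mem_left x _ syx4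
  have a6 : x * (y * x * y - x ^ 3 - x ^ 4) + x ^ 5 ∈ S :=
    S.add_mem (S.mul_mem_left x _ syxy) g5
  have a7 : x * (y * x ^ 2 * y + x ^ 4) - x ^ 5 ∈ S :=
    S.sub_mem (S.mul_mem_left x _ syx2y) g5
  have b1 : x ^ 2 * (x * y + y * x) - x ^ 3 * y ∈ S :=
    S.sub_mem (S.mul_mem_left (x ^ 2) _ g1) g3
  have b2 : x ^ 2 * (y * x ^ 2 - x ^ 2 * y) + x ^ 4 * y ∈ S :=
    S.add_mem (S.mul_mem_left (x ^ 2) _ syx2) s4y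
  have b3 : x ^ 2 * (y * x ^ 3) ∈ S := S.mul_mem_left (x ^ 2) _ syx3
  have b4 : x ^ 2 * (y * x ^ 4) ∈ S := S.mul_mem_left (x ^ 2) _ syx4
  have b5 : x ^ 2 * (y ^ 2 + x ^ 2 + x ^ 3) - x ^ 5 ∈ S :=
    S.sub_mem (S.mul_mem_left (x ^ 2) _ s2') g5
  have b6 : x ^ 2 * (y * x * y - x ^ 3 - x ^ 4) + x ^ 5 + x ^ 6 ∈ S :=
    S.add_mem (S.add_mem (S.mul_mem_left (x ^ 2) _ syxy) g5) s6
  have b7 : x ^ 2 * (y * x ^ 2 * y + x ^ 4) - x ^ 6 ∈ S :=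
    S.sub_mem (S.mul_mem_left (x ^ 2) _ syx2y) s6
  -- the candidate spanning submodule
  set M : Submodule ℂ (FreeAlgebra ℂ (Fin 2)) := Submodule.span ℂ (Set.range f) with hM
  set V : Submodule ℂ (FreeAlgebra ℂ (Fin 2)) :=
    M ⊔ (TwoSidedIdeal.asIdeal S).restrictScalars ℂ with hV
  have hfM : ∀ i, f i ∈ M := fun i => Submodule.subset_span ⟨i, rfl⟩
  have hMV : ∀ m ∈ M, m ∈ V := fun m hm => Submodule.mem_sup_left hm
  have hSV : ∀ s ∈ S, s ∈ V := fun s hs =>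
    Submodule.mem_sup_right (by simpa [Submodule.restrictScalars_mem,
      TwoSidedIdeal.mem_asIdeal] using hs)
  have m1 : (1 : FreeAlgebra ℂ (Fin 2)) ∈ M := hfM 0
  have mx : x ∈ M := hfM 1
  have mx2 : x ^ 2 ∈ M := hfM 2
  have mx3 : x ^ 3 ∈ M := hfM 3
  have mx4 : x ^ 4 ∈ M := hfM 4
  have my : y ∈ M := hfM 5
  have mxy : x * y ∈ M := hfM 6
  have mx2y : x ^ 2 * y ∈ M := hfM 7
  -- key combinators
  have key3 : ∀ a m s : FreeAlgebra ℂ (Fin 2), m ∈ M → s ∈ S → a - m = s → a ∈ V := by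
    intro a m s hm hs h
    have : a = m + (a - m) := by abel
    rw [this, h]
    exact Submodule.add_mem _ (hMV _ hm) (hSV _ hs)
  have keyE : ∀ a m : FreeAlgebra ℂ (Fin 2), m ∈ M → a = m → a ∈ V :=
    fun a m hm h => h ▸ hMV m hm
  have keyS : ∀ a s : FreeAlgebra ℂ (Fin 2), s ∈ S → a = s → a ∈ V :=
    fun a s hs h => h ▸ hSV s hs
  -- products of basis monomials lie in V
  have hrange : Set.range f =
      ({1, x, x ^ 2, x ^ 3, x ^ 4, y, x * y, x ^ 2 * y} : Set (FreeAlgebra ℂ (Fin 2))) := by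
    rw [hf]
    simp only [Matrix.range_cons, Matrix.range_empty, Set.union_empty, Set.singleton_union]
  have hprod : ∀ u ∈ Set.range f, ∀ v ∈ Set.range f, u * v ∈ V := by
    intro u hu v hv
    rw [hrange] at hu hv
    simp only [Set.mem_insert_iff, Set.mem_singleton_iff] at hu hv
    rcases hu with rfl | rfl | rfl | rfl | rfl | rfl | rfl | rfl <;>
      rcases hv with rfl | rfl | rfl | rfl | rfl | rfl | rfl | rfl
    -- row 1
    · exact keyE _ _ m1 (one_mul _)
    · exact keyE _ _ mx (one_mul _)
    · exact keyE _ _ mx2 (one_mul _)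
    · exact keyE _ _ mx3 (one_mul _)
    · exact keyE _ _ mx4 (one_mul _)
    · exact keyE _ _ my (one_mul _)
    · exact keyE _ _ mxy (one_mul _)
    · exact keyE _ _ mx2y (one_mul _)
    -- row x
    · exact keyE _ _ mx (mul_one _)
    · exact keyE _ _ mx2 (by noncomm_ring)
    · exact keyE _ _ mx3 (by noncomm_ring)
    · exact keyE _ _ mx4 (by noncomm_ring)
    · exact keyS _ _ g5 (by noncomm_ring)
    · exact keyE _ _ mxy rfl
    · exact keyE _ _ mx2y (by noncomm_ring)
    · exact keyS _ _ g3 (by noncomm_ring)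
    -- row x^2
    · exact keyE _ _ mx2 (mul_one _)
    · exact keyE _ _ mx3 (by noncomm_ring)
    · exact keyE _ _ mx4 (by noncomm_ring)
    · exact keyS _ _ g5 (by noncomm_ring)
    · exact keyS _ _ s6 (by noncomm_ring)
    · exact keyE _ _ mx2y rfl
    · exact keyS _ _ g3 (by noncomm_ring)
    · exact keyS _ _ s4y (by noncomm_ring)
    -- row x^3
    · exact keyE _ _ mx3 (mul_one _)
    · exact keyE _ _ mx4 (by noncomm_ring)
    · exact keyS _ _ g5 (by noncomm_ring)
    · exact keyS _ _ s6 (by noncomm_ring)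
    · exact keyS _ _ s7 (by noncomm_ring)
    · exact keyS _ _ g3 rfl
    · exact keyS _ _ s4y (by noncomm_ring)
    · exact keyS _ _ s5y (by noncomm_ring)
    -- row x^4
    · exact keyE _ _ mx4 (mul_one _)
    · exact keyS _ _ g5 (by noncomm_ring)
    · exact keyS _ _ s6 (by noncomm_ring)
    · exact keyS _ _ s7 (by noncomm_ring)
    · exact keyS _ _ s8 (by noncomm_ring)
    · exact keyS _ _ s4y rfl
    · exact keyS _ _ s5y (by noncomm_ring)
    · exact keyS _ _ s6y (by noncomm_ring)
    -- row y
    · exact keyE _ _ my (mul_one _)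
    · exact key3 _ _ _ (M.neg_mem mxy) g1 (by noncomm_ring)
    · exact key3 _ _ _ mx2y syx2 (by noncomm_ring)
    · exact keyS _ _ syx3 rfl
    · exact keyS _ _ syx4 rfl
    · exact key3 _ _ _ (M.neg_mem (M.add_mem mx2 mx3)) s2' (by noncomm_ring)
    · exact key3 _ _ _ (M.add_mem mx3 mx4) syxy (by noncomm_ring)
    · exact key3 _ _ _ (M.neg_mem mx4) syx2y (by noncomm_ring)
    -- row x*y
    · exact keyE _ _ mxy (mul_one _)
    · exact key3 _ _ _ (M.neg_mem mx2y) a1 (by noncomm_ring)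
    · exact keyS _ _ a2 (by noncomm_ring)
    · exact keyS _ _ a3 (by noncomm_ring)
    · exact keyS _ _ a4 (by noncomm_ring)
    · exact key3 _ _ _ (M.neg_mem (M.add_mem mx3 mx4)) sxy2 (by noncomm_ring)
    · exact key3 _ _ _ mx4 a6 (by noncomm_ring)
    · exact keyS _ _ a7 (by noncomm_ring)
    -- row x^2*y
    · exact keyE _ _ mx2y (mul_one _)
    · exact keyS _ _ b1 (by noncomm_ring)
    · exact keyS _ _ b2 (by noncomm_ring)
    · exact keyS _ _ b3 (by noncomm_ring)
    · exact keyS _ _ b4 (by noncomm_ring)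
    · exact key3 _ _ _ (M.neg_mem mx4) b5 (by noncomm_ring)
    · exact keyS _ _ b6 (by noncomm_ring)
    · exact keyS _ _ b7 (by noncomm_ring)
  -- multiplicative closure of V
  have step1 : ∀ u ∈ Set.range f, ∀ b ∈ M, u * b ∈ V := by
    intro u hu b hb
    induction hb using Submodule.span_induction with
    | mem w hw => exact hprod u hu w hw
    | zero => rw [mul_zero]; exact V.zero_mem
    | add p q _ _ hp hq => rw [mul_add]; exact V.add_mem hp hq
    | smul c p _ hp => rw [mul_smul_comm]; exact V.smul_mem c hp
  have step2 : ∀ a ∈ M, ∀ b ∈ M, a * b ∈ V := by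
    intro a ha b hb
    induction ha using Submodule.span_induction with
    | mem u hu => exact step1 u hu b hb
    | zero => rw [zero_mul]; exact V.zero_mem
    | add p q _ _ hp hq => rw [add_mul]; exact V.add_mem hp hq
    | smul c p _ hp => rw [smul_mul_assoc]; exact V.smul_mem c hp
  have hmul : ∀ a b : FreeAlgebra ℂ (Fin 2), a ∈ V → b ∈ V → a * b ∈ V := by
    intro a b ha hb
    obtain ⟨ma, hma, sa, hsa, rfl⟩ := Submodule.mem_sup.mp ha
    obtain ⟨mb, hmb, sb, hsb, rfl⟩ := Submodule.mem_sup.mp hb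
    have hsa' : sa ∈ S := by simpa [Submodule.restrictScalars_mem,
      TwoSidedIdeal.mem_asIdeal] using hsa
    have hsb' : sb ∈ S := by simpa [Submodule.restrictScalars_mem,
      TwoSidedIdeal.mem_asIdeal] using hsb
    have e : (ma + sa) * (mb + sb) = ma * mb + (ma * sb + sa * (mb + sb)) := by noncomm_ring
    rw [e]
    exact Submodule.add_mem _ (step2 ma hma mb hmb)
      (hSV _ (S.add_mem (S.mul_mem_left _ _ hsb') (S.mul_mem_right _ _ hsa')))
  -- every element is in V
  have htop : ∀ r : FreeAlgebra ℂ (Fin 2), r ∈ V := by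
    intro r
    refine FreeAlgebra.induction ℂ (Fin 2) ?_ ?_ ?_ ?_ r
    · intro c
      simpa [Algebra.algebraMap_eq_smul_one] using V.smul_mem c (hMV _ m1)
    · intro i
      fin_cases i
      · show FreeAlgebra.ι ℂ 0 ∈ V
        rw [← hx]; exact hMV _ mx
      · show FreeAlgebra.ι ℂ 1 ∈ V
        rw [← hy]; exact hMV _ my
    · exact hmul
    · exact fun a b ha hb => V.add_mem ha hb
  -- conclusion
  intro r
  obtain ⟨m, hm, s, hs, heq⟩ := Submodule.mem_sup.mp (htop r)
  have hs' : s ∈ S := by simpa [Submodule.restrictScalars_mem,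
    TwoSidedIdeal.mem_asIdeal] using hs
  obtain ⟨c, hc⟩ := (Submodule.mem_span_range_iff_exists_fun ℂ).mp hm
  refine ⟨c, ?_⟩
  have : r - ∑ i, c i • f i = s := by rw [hc, ← heq]; abel
  rw [this]
  exact hs'
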